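/- For every integer n ≥ 1, the subgraph of the non-commuting graph Γ(U_{6n}) induced on the vertex set Ω₁ ∪ Ω₂ ∪ Ω₃ is 2n-regular: every vertex of this induced subgraph has degree exactly 2n in it. -/

import Mathlib

/-- The inversion automorphism of `Multiplicative (ZMod 3)` (i.e. `b ↦ b⁻¹`). -/
def negAut : MulAut (Multiplicative (ZMod 3)) := MulEquiv.inv (Multiplicative (ZMod 3))

lemma negAut_sq : negAut * negAut = 1 := by
  ext x
  simp [negAut]

/-- The action of `ZMod (2*n)` on `Multiplicative (ZMod 3)`, where the generator acts
by inversion (negation). -/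
def U6nAct (n : ℕ) : Multiplicative (ZMod (2 * n)) →* MulAut (Multiplicative (ZMod 3)) :=
  AddMonoidHom.toMultiplicativeLeft
    (ZMod.lift (2 * n) ⟨zmultiplesHom _ (Additive.ofMul negAut), by
      show ((2 * n : ℕ) : ℤ) • Additive.ofMul negAut = 0
      have : negAut ^ (2 * n) = 1 := by
        rw [pow_mul, pow_two, negAut_sq, one_pow]
      rw [← zpow_natCast negAut, Nat.cast_mul] at this
      rw [show ((2 * n : ℕ) : ℤ) • Additive.ofMul negAut
            = Additive.ofMul (negAut ^ ((2 * n : ℕ) : ℤ)) from rfl]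
      rw [Nat.cast_mul, this]; rfl⟩)

/-- The group `U_{6n} = ⟨a, b | a^(2n) = b³ = 1, a⁻¹ b a = b⁻¹⟩`, realized as the
semidirect product `(ZMod 3) ⋊ (ZMod (2n))` where the generator of `ZMod (2n)` acts by
negation. -/
abbrev U6n (n : ℕ) := SemidirectProduct (Multiplicative (ZMod 3))
    (Multiplicative (ZMod (2 * n))) (U6nAct n)

/-- The generator `a` of `U_{6n}`, of order `2n`. -/
def Ua (n : ℕ) : U6n n := SemidirectProduct.inr (Multiplicative.ofAdd 1)

/-- The generator `b` of `U_{6n}`, of order `3`. -/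
def Ub (n : ℕ) : U6n n := SemidirectProduct.inl (Multiplicative.ofAdd 1)

/-- The non-commuting graph of `U_{6n}`: vertices are the non-central elements, two
distinct vertices are adjacent iff they do not commute. -/
def ncGraph (n : ℕ) : SimpleGraph {x : U6n n // x ∉ Subgroup.center (U6n n)} where
  Adj u v := u.val * v.val ≠ v.val * u.val
  symm := ⟨fun _ _ h => fun e => h e.symm⟩
  loopless := ⟨fun _ h => h rfl⟩

/-- The partition of the vertex set of the non-commuting graph of `U_{6n}` into the four
parts `Ω₁, Ω₂, Ω₃, Ω₄`. -/
def Omega (n : ℕ) : Fin 4 → Set {x : U6n n // x ∉ Subgroup.center (U6n n)} :=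
  ![{v | ∃ r < n, v.val = Ua n ^ (2 * r + 1)},
    {v | ∃ r < n, v.val = Ua n ^ (2 * r + 1) * Ub n},
    {v | ∃ r < n, v.val = Ua n ^ (2 * r + 1) * Ub n ^ 2},
    {v | ∃ r < n, ∃ k, (k = 1 ∨ k = 2) ∧ v.val = Ua n ^ (2 * r) * Ub n ^ k}]

lemma Ua_pow (n m : ℕ) :
    Ua n ^ m = SemidirectProduct.inr (Multiplicative.ofAdd ((m : ZMod (2*n)))) := by
  rw [Ua, ← map_pow]
  congr 1
  rw [← ofAdd_nsmul]
  norm_num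

lemma Ub_pow (n k : ℕ) :
    Ub n ^ k = SemidirectProduct.inl (Multiplicative.ofAdd ((k : ZMod 3))) := by
  rw [Ub, ← map_pow]
  congr 1
  rw [← ofAdd_nsmul]
  norm_num

lemma act_int (n : ℕ) (m : ℤ) :
    U6nAct n (Multiplicative.ofAdd ((m : ZMod (2*n)))) = negAut ^ m := by
  show (AddMonoidHom.toMultiplicativeLeft _) _ = _
  rw [AddMonoidHom.coe_toMultiplicativeLeft]
  simp only [Function.comp_apply, toAdd_ofAdd]
  rw [ZMod.lift_coe]
  rfl

lemma act_odd (n r : ℕ) :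
    U6nAct n (Multiplicative.ofAdd (((2*r+1 : ℕ) : ZMod (2*n)))) = negAut := by
  have : ((2*r+1 : ℕ) : ZMod (2*n)) = ((2*r+1 : ℤ) : ZMod (2*n)) := by push_cast; ring
  rw [this, act_int]
  have h2 : negAut ^ (2 : ℤ) = 1 := by rw [show (2:ℤ) = (1:ℤ)+1 by ring, zpow_add, zpow_one, negAut_sq]
  calc negAut ^ (2*r+1 : ℤ) = (negAut ^ (2:ℤ)) ^ (r:ℤ) * negAut := by
        rw [zpow_add, zpow_one, zpow_mul]
    _ = negAut := by rw [h2, one_zpow, one_mul]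

lemma prod_form (n r k : ℕ) :
    Ua n ^ (2*r+1) * Ub n ^ k =
      ⟨Multiplicative.ofAdd (-(k : ZMod 3)),
       Multiplicative.ofAdd ((2*r+1 : ℕ) : ZMod (2*n))⟩ := by
  rw [Ua_pow, Ub_pow]
  refine SemidirectProduct.ext ?_ ?_
  · rw [SemidirectProduct.mul_left, SemidirectProduct.left_inr,
      SemidirectProduct.right_inr, SemidirectProduct.left_inl, act_odd, one_mul]
    rfl
  · simp

lemma key3 : ∀ x y : ZMod 3, (x + -y = y + -x ↔ x = y) := by decide

lemma comm_iff (n : ℕ) (u w : U6n n)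
    (hu : U6nAct n u.right = negAut) (hw : U6nAct n w.right = negAut) :
    u * w = w * u ↔ u.left = w.left := by
  constructor
  · intro h
    have h1 := congrArg SemidirectProduct.left h
    simp only [SemidirectProduct.mul_left, hu, hw] at h1
    have h2 := congrArg Multiplicative.toAdd h1
    simp only [negAut, MulEquiv.inv_apply, toAdd_mul, toAdd_inv] at h2
    have := (key3 _ _).mp h2
    exact Multiplicative.toAdd.injective this
  · intro h
    refine SemidirectProduct.ext ?_ ?_
    · simp [hu, hw, h]
    · simp [mul_comm]

lemma odd_noncentral (n : ℕ) (g : U6n n) (hg : U6nAct n g.right = negAut) :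
    g ∉ Subgroup.center (U6n n) := by
  intro h
  rw [Subgroup.mem_center_iff] at h
  have h0 := h (Ub n)
  have h1 := congrArg SemidirectProduct.left h0
  simp only [SemidirectProduct.mul_left, hg, Ub, SemidirectProduct.left_inl,
    SemidirectProduct.right_inl, map_one, MulAut.one_apply] at h1
  have h2 := congrArg Multiplicative.toAdd h1
  simp only [negAut, MulEquiv.inv_apply, toAdd_mul, toAdd_inv, toAdd_ofAdd] at h2
  have : ∀ x : ZMod 3, (1:ZMod 3) + x = x + -1 → False := by decide
  exact this _ h2

lemma mem_S_iff (n : ℕ) (v : {x : U6n n // x ∉ Subgroup.center (U6n n)}) :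
    v ∈ Omega n 0 ∪ Omega n 1 ∪ Omega n 2 ↔
      ∃ r < n, (v.1).right = Multiplicative.ofAdd ((2*r+1 : ℕ) : ZMod (2*n)) := by
  constructor
  · rintro ((⟨r, hr, h⟩ | ⟨r, hr, h⟩) | ⟨r, hr, h⟩)
    · exact ⟨r, hr, by rw [h, Ua_pow]; rfl⟩
    · exact ⟨r, hr, by
        rw [h, show Ub n = Ub n ^ 1 from (pow_one _).symm, prod_form]⟩
    · exact ⟨r, hr, by rw [h, prod_form]⟩
  · rintro ⟨r, hr, h⟩
    have hcase : ∀ z : ZMod 3,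
        z = -((0:ℕ):ZMod 3) ∨ z = -((1:ℕ):ZMod 3) ∨ z = -((2:ℕ):ZMod 3) := by decide
    have hv : ∀ k : ℕ, Multiplicative.toAdd (v.1.left) = -((k:ℕ):ZMod 3) →
        v.1 = Ua n ^ (2*r+1) * Ub n ^ k := by
      intro k hk
      rw [prod_form]
      refine SemidirectProduct.ext ?_ h
      have := congrArg Multiplicative.ofAdd hk
      simpa using this
    rcases hcase (Multiplicative.toAdd (v.1.left)) with h0 | h0 | h0
    · left; left
      exact ⟨r, hr, by rw [hv 0 h0, pow_zero, mul_one]⟩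
    · left; right
      exact ⟨r, hr, by rw [hv 1 h0, pow_one]⟩
    · right
      exact ⟨r, hr, hv 2 h0⟩

lemma card_ne (X : Multiplicative (ZMod 3)) :
    Nat.card {x : Multiplicative (ZMod 3) // x ≠ X} = 2 := by
  rw [Nat.card_eq_fintype_card]
  revert X; decide


/-- The subgraph of the non-commuting graph of `U_{6n}` induced on `Ω₁ ∪ Ω₂ ∪ Ω₃` is
`2n`-regular: every vertex of this induced subgraph has degree exactly `2n` in it. -/
theorem U6n_induced_regular (n : ℕ) (hn : 1 ≤ n) :
    ∀ v, (((ncGraph n).induce (Omega n 0 ∪ Omega n 1 ∪ Omega n 2)).neighborSet v).ncard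
      = 2 * n := by
  haveI : NeZero (2*n) := ⟨by omega⟩
  intro v
  obtain ⟨r0, hr0, hv⟩ := (mem_S_iff n v.1).mp v.2
  have hodd : U6nAct n (v.1.1 : U6n n).right = negAut := by rw [hv]; exact act_odd n r0
  let g : ({x : Multiplicative (ZMod 3) // x ≠ (v.1.1 : U6n n).left} × Fin n) →
      ↥(((ncGraph n).induce (Omega n 0 ∪ Omega n 1 ∪ Omega n 2)).neighborSet v) := fun p =>
    ⟨⟨⟨(⟨p.1.1, Multiplicative.ofAdd ((2*(p.2:ℕ)+1 : ℕ) : ZMod (2*n))⟩ : U6n n),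
        odd_noncentral n _ (act_odd n p.2)⟩,
      (mem_S_iff n _).mpr ⟨p.2, p.2.2, rfl⟩⟩,
      by
        rw [SimpleGraph.mem_neighborSet]
        intro h
        have h' : (v.1.1 : U6n n) *
            (⟨p.1.1, Multiplicative.ofAdd ((2*(p.2:ℕ)+1 : ℕ) : ZMod (2*n))⟩ : U6n n) =
            (⟨p.1.1, Multiplicative.ofAdd ((2*(p.2:ℕ)+1 : ℕ) : ZMod (2*n))⟩ : U6n n) *
            (v.1.1 : U6n n) := h
        have := (comm_iff n _ _ hodd (act_odd n p.2)).mp h'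
        exact p.1.2 this.symm⟩
  have hbij : Function.Bijective g := by
    constructor
    · rintro ⟨⟨x, hx⟩, r⟩ ⟨⟨y, hy⟩, s⟩ h
      simp only [g, Subtype.mk.injEq, SemidirectProduct.ext_iff] at h
      obtain ⟨h1, h2⟩ := h
      have h3 : ((2*(r:ℕ)+1 : ℕ) : ZMod (2*n)) = ((2*(s:ℕ)+1 : ℕ) : ZMod (2*n)) :=
        congrArg Multiplicative.toAdd h2
      have h4 : (2*(r:ℕ)+1) = (2*(s:ℕ)+1) := by
        have := congrArg ZMod.val h3
        rwa [ZMod.val_cast_of_lt (by omega), ZMod.val_cast_of_lt (by omega)] at this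
      have : (r:ℕ) = s := by omega
      exact Prod.ext (Subtype.ext h1) (Fin.ext this)
    · rintro ⟨w, hw⟩
      obtain ⟨r, hr, hwr⟩ := (mem_S_iff n w.1).mp w.2
      have hwodd : U6nAct n (w.1.1 : U6n n).right = negAut := by
        rw [hwr]; exact act_odd n r
      have hw' : (v.1.1 : U6n n) * w.1.1 ≠ w.1.1 * (v.1.1 : U6n n) := by
        rw [SimpleGraph.mem_neighborSet] at hw; exact hw
      have hne : (w.1.1 : U6n n).left ≠ (v.1.1 : U6n n).left := by
        intro h
        exact hw' ((comm_iff n _ _ hodd hwodd).mpr h.symm)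
      refine ⟨⟨⟨(w.1.1 : U6n n).left, hne⟩, ⟨r, hr⟩⟩, ?_⟩
      apply Subtype.ext
      apply Subtype.ext
      apply Subtype.ext
      exact SemidirectProduct.ext rfl hwr.symm
  rw [← Nat.card_coe_set_eq, ← Nat.card_eq_of_bijective g hbij, Nat.card_prod,
    card_ne, Nat.card_eq_fintype_card, Fintype.card_fin]
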